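/- Let K be a field of characteristic different from 2 whose absolute Galois group Gal(K^sep/K) is topologically finitely generated. Then the quotient group K^×/(K^×)^2 of the multiplicative group of K by its subgroup of nonzero squares is finite. -/

import Mathlib

private lemma aux_fixed_mem_range {K Ω : Type*} [Field K] [Field Ω] [Algebra K Ω]
    [IsSepClosure K Ω] (x : Ω)
    (h : ∀ σ : Ω ≃ₐ[K] Ω, σ x = x) : x ∈ (algebraMap K Ω).range := by
  have hint : IsIntegral K x := Algebra.IsIntegral.isIntegral x
  have hsep : (minpoly K x).Separable := Algebra.IsSeparable.isSeparable K x
  have hsplit : Polynomial.Splits ((minpoly K x).map (algebraMap K Ω)) :=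
    (IsSepClosure.isGalois (k := K) (K := Ω)).to_normal.splits x
  rw [← minpoly.natDegree_eq_one_iff]
  have hcard : (minpoly K x).natDegree =
      Multiset.card ((minpoly K x).map (algebraMap K Ω)).roots :=
    ((Polynomial.natDegree_map (algebraMap K Ω)).symm.trans hsplit.natDegree_eq_card_roots)
  have hnodup : ((minpoly K x).map (algebraMap K Ω)).roots.Nodup :=
    Polynomial.nodup_roots (hsep.map)
  have hall : ∀ y ∈ ((minpoly K x).map (algebraMap K Ω)).roots, y = x := by
    intro y hy
    have hy0 : Polynomial.aeval y (minpoly K x) = 0 := by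
      rw [Polynomial.aeval_def, ← Polynomial.eval_map]
      exact Polynomial.isRoot_of_mem_roots hy
    have hconj : IsConjRoot K x y := isConjRoot_of_aeval_eq_zero hint hy0
    obtain ⟨σ, hσ⟩ := hconj.exists_algEquiv
    calc y = σ.symm (σ y) := (σ.symm_apply_apply y).symm
    _ = σ.symm x := by rw [hσ]
    _ = x := h σ.symm
  have hle : Multiset.card ((minpoly K x).map (algebraMap K Ω)).roots ≤ 1 := by
    classical
    have h1 : ((minpoly K x).map (algebraMap K Ω)).roots.toFinset ⊆ {x} := by
      intro y hy
      simp only [Finset.mem_singleton]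
      exact hall y (Multiset.mem_toFinset.mp hy)
    calc Multiset.card ((minpoly K x).map (algebraMap K Ω)).roots
        = ((minpoly K x).map (algebraMap K Ω)).roots.toFinset.card :=
          (Multiset.toFinset_card_of_nodup hnodup).symm
      _ ≤ ({x} : Finset Ω).card := Finset.card_le_card h1
      _ = 1 := Finset.card_singleton x
  have hpos := minpoly.natDegree_pos hint
  omega

private lemma aux_fix_adjoin {K Ω : Type*} [Field K] [Field Ω] [Algebra K Ω]
    (σ : Ω ≃ₐ[K] Ω) (x : Ω) (h : σ x = x) :
    σ ∈ (IntermediateField.adjoin K {x}).fixingSubgroup := by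
  rw [IntermediateField.mem_fixingSubgroup_iff]
  intro y hy
  have hle : IntermediateField.adjoin K {x} ≤
      IntermediateField.fixedField (Subgroup.zpowers σ) := by
    rw [IntermediateField.adjoin_le_iff]
    rintro z rfl
    intro g
    have hst : Subgroup.zpowers σ ≤ MulAction.stabilizer (Ω ≃ₐ[K] Ω) z := by
      rw [Subgroup.zpowers_le]; exact h
    exact hst g.2
  exact hle hy ⟨σ, Subgroup.mem_zpowers σ⟩

/-- If `K` is a field of characteristic different from `2` whose absolute Galois group
`Gal(K^sep/K)` is topologically finitely generated, then `Kˣ/(Kˣ)²` is finite. -/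
theorem stmt_0 (K : Type*) [Field K] (hchar : ringChar K ≠ 2)
    (Ω : Type*) [Field Ω] [Algebra K Ω] [IsSepClosure K Ω]
    (htfg : ∃ S : Finset (Ω ≃ₐ[K] Ω),
      Dense ((Subgroup.closure (S : Set (Ω ≃ₐ[K] Ω)) : Subgroup (Ω ≃ₐ[K] Ω)) : Set (Ω ≃ₐ[K] Ω))) :
    Finite (Kˣ ⧸ (powMonoidHom 2 : Kˣ →* Kˣ).range) := by
  classical
  obtain ⟨S, hS⟩ := htfg
  haveI : IsSepClosed Ω := IsSepClosure.sep_closed K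
  have h2 : (2 : Ω) ≠ 0 := by
    intro h2
    have h2K : (2 : K) = 0 := (algebraMap K Ω).injective (by rw [map_ofNat, map_zero]; exact h2)
    have hdvd : ringChar K ∣ 2 := ringChar.dvd (by exact_mod_cast h2K)
    rcases (Nat.dvd_prime Nat.prime_two).mp hdvd with h1 | h2'
    · exact CharP.ringChar_ne_one h1
    · exact hchar h2'
  haveI : NeZero (2 : Ω) := ⟨h2⟩
  have hroot : ∀ a : Kˣ, ∃ r : Ω, r ^ 2 = algebraMap K Ω (a : K) := fun a =>
    IsSepClosed.exists_pow_nat_eq (algebraMap K Ω (a : K)) 2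
  choose r hr using hroot
  have hrne : ∀ a : Kˣ, r a ≠ 0 := by
    intro a h0
    have : (a : K) = 0 := by
      apply (algebraMap K Ω).injective
      rw [map_zero, ← hr a, h0]
      ring
    exact a.ne_zero this
  -- fixing values are ±1
  have hpm : ∀ (a : Kˣ) (σ : Ω ≃ₐ[K] Ω), σ (r a) = r a ∨ σ (r a) = -(r a) := by
    intro a σ
    have hsq : σ (r a) ^ 2 = (r a) ^ 2 := by
      rw [← map_pow, hr a, AlgEquiv.commutes]
    exact sq_eq_sq_iff_eq_or_eq_neg.mp hsq
  have hnegne : ∀ a : Kˣ, -(r a) ≠ r a := by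
    intro a h
    have h20 : (2 : Ω) * r a = 0 := by linear_combination -h
    rcases mul_eq_zero.mp h20 with h' | h'
    · exact h2 h'
    · exact hrne a h'
  set H := (powMonoidHom 2 : Kˣ →* Kˣ).range with hH
  let g : Kˣ → (↥S → Prop) := fun a s => s.1 (r a) = r a
  have key : ∀ a b : Kˣ, g a = g b → a⁻¹ * b ∈ H := by
    intro a b hg
    set d : Ω := r b * (r a)⁻¹ with hd
    have hdsq : d ^ 2 = algebraMap K Ω ((a⁻¹ * b : Kˣ) : K) := by
      have : ((a⁻¹ * b : Kˣ) : K) = (b : K) * ((a : K))⁻¹ := by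
        push_cast
        ring
      rw [this, hd, mul_pow, inv_pow, hr a, hr b, map_mul, map_inv₀]
    have hSfix : ∀ s ∈ S, s d = d := by
      intro s hs
      have hiff : (s (r a) = r a) ↔ (s (r b) = r b) := iff_of_eq (congrFun hg ⟨s, hs⟩)
      rcases hpm a s with ha1 | ha2
      · have hb1 : s (r b) = r b := hiff.mp ha1
        rw [hd, map_mul, map_inv₀, ha1, hb1]
      · have hb2 : s (r b) = -(r b) := by
          rcases hpm b s with hb | hb
          · exfalso
            have : s (r a) = r a := hiff.mpr hb
            rw [ha2] at this
            exact hnegne a this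
          · exact hb
        rw [hd, map_mul, map_inv₀, ha2, hb2, inv_neg, neg_mul_neg]
    have hall : ∀ σ : Ω ≃ₐ[K] Ω, σ d = d := by
      have hsub : (Subgroup.closure (S : Set (Ω ≃ₐ[K] Ω))) ≤
          (IntermediateField.adjoin K {d}).fixingSubgroup :=
        (Subgroup.closure_le _).mpr (fun s hs => aux_fix_adjoin s d (hSfix s hs))
      haveI : FiniteDimensional K (IntermediateField.adjoin K {d}) :=
        IntermediateField.adjoin.finiteDimensional (Algebra.IsIntegral.isIntegral d)
      have hclosed := (IntermediateField.adjoin K {d}).fixingSubgroup_isClosed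
      have huniv : ((IntermediateField.adjoin K {d}).fixingSubgroup :
          Set (Ω ≃ₐ[K] Ω)) = Set.univ := by
        apply Set.eq_univ_of_univ_subset
        rw [← hS.closure_eq]
        exact hclosed.closure_subset_iff.mpr hsub
      intro σ
      have hmem : σ ∈ (IntermediateField.adjoin K {d}).fixingSubgroup := by
        rw [← SetLike.mem_coe, huniv]
        trivial
      exact (IntermediateField.mem_fixingSubgroup_iff _ σ).mp hmem d
        (IntermediateField.mem_adjoin_simple_self K d)
    obtain ⟨e, he⟩ := aux_fixed_mem_range d hall
    have hdne : d ≠ 0 := mul_ne_zero (hrne b) (inv_ne_zero (hrne a))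
    have hene : e ≠ 0 := fun h0 => hdne (by rw [← he, h0, map_zero])
    refine ⟨Units.mk0 e hene, ?_⟩
    ext
    show e ^ 2 = ((a⁻¹ * b : Kˣ) : K)
    apply (algebraMap K Ω).injective
    rw [map_pow, he, hdsq]
  have wd : ∀ a b : Kˣ, @Setoid.r _ (QuotientGroup.leftRel H) a b → g a = g b := by
    intro a b hab
    rw [QuotientGroup.leftRel_apply] at hab
    obtain ⟨c, hc⟩ := hab
    have hc' : (b : K) = (c : K) ^ 2 * (a : K) := by
      have : a * (powMonoidHom 2 c) = b := by rw [hc]; group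
      rw [← this]
      push_cast [powMonoidHom_apply]
      ring
    have hsq : (r b) ^ 2 = (algebraMap K Ω (c : K) * r a) ^ 2 := by
      rw [mul_pow, hr a, hr b, ← map_pow, ← map_mul, hc']
    obtain ⟨u, hu1, hune, hufix⟩ : ∃ u : Ω, r b = u * r a ∧ u ≠ 0 ∧
        ∀ σ : Ω ≃ₐ[K] Ω, σ u = u := by
      rcases sq_eq_sq_iff_eq_or_eq_neg.mp hsq with h' | h'
      · exact ⟨algebraMap K Ω (c : K), h', by
          simpa using c.ne_zero, fun σ => σ.commutes _⟩
      · refine ⟨-(algebraMap K Ω (c : K)), by rw [h']; ring, by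
          simpa using c.ne_zero, fun σ => by rw [map_neg, σ.commutes]⟩
    funext s
    show (s.1 (r a) = r a) = (s.1 (r b) = r b)
    have hcomp : s.1 (r b) = u * s.1 (r a) := by rw [hu1, map_mul, hufix s.1]
    apply propext
    rw [hcomp, hu1]
    exact (mul_right_inj' hune).symm
  refine Finite.of_injective
    (fun x : Kˣ ⧸ H => Quotient.liftOn' x g wd) ?_
  intro x y
  refine Quotient.inductionOn₂' x y ?_
  intro a b h
  have h' : g a = g b := h
  exact Quotient.sound' (QuotientGroup.leftRel_apply.mpr (key a b h'))
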